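/- Let f ∈ H̄₀² and let q ∈ M_n be an irreducible critical point of φ_{f,n}. Then ⟨ p/q², f − L_q/q ⟩ = 0 for every polynomial p ∈ P_{2n−1}. -/

import Mathlib

open Complex Polynomial MeasureTheory Filter Set

noncomputable section

namespace RatApprox

/-- The point of modulus `ρ` and argument `θ` in the complex plane. -/
def circ (ρ θ : ℝ) : ℂ := (ρ : ℂ) * Complex.exp (θ * Complex.I)

/-- The `L²(𝕋)` inner product `⟨f,g⟩ = ∫_𝕋 f·conj g |dτ|/2π` of the boundary values. -/
def circInner (f g : ℂ → ℂ) : ℂ :=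
  (2 * Real.pi)⁻¹ * ∫ θ in (0:ℝ)..(2 * Real.pi), f (circ 1 θ) * (starRingEnd ℂ) (g (circ 1 θ))

/-- The squared `L²(𝕋)` norm. -/
def circNormSq (f : ℂ → ℂ) : ℝ := (circInner f f).re

/-- Membership in `L²` of the unit circle. -/
def MemL2 (f : ℂ → ℂ) : Prop :=
  MemLp (fun θ : ℝ => f (circ 1 θ)) 2 (volume.restrict (Set.Ioc (0:ℝ) (2 * Real.pi)))

/-- Fourier coefficient of index `k` of a boundary function. -/
def fourierCoef (f : ℂ → ℂ) (k : ℤ) : ℂ :=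
  (2 * Real.pi)⁻¹ * ∫ θ in (0:ℝ)..(2 * Real.pi),
    f (circ 1 θ) * Complex.exp (-((k : ℂ) * θ * Complex.I))

/-- The Hardy space `H²` of the unit disk (boundary values together with the
holomorphic extension inside the disk). -/
def MemH2 (f : ℂ → ℂ) : Prop :=
  MemL2 f ∧ (∀ k : ℤ, k < 0 → fourierCoef f k = 0) ∧
    DifferentiableOn ℂ f {z : ℂ | ‖z‖ < 1}

/-- The space `H̄₀²`: the orthogonal complement of `H²` in `L²`, identified with traces of
functions holomorphic in `|z|>1` vanishing at infinity. -/
def MemH2bar0 (f : ℂ → ℂ) : Prop :=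
  MemL2 f ∧ (∀ k : ℤ, 0 ≤ k → fourierCoef f k = 0) ∧
    DifferentiableOn ℂ f {z : ℂ | 1 < ‖z‖} ∧
    Tendsto f (comap (fun z : ℂ => ‖z‖) atTop) (nhds 0)

/-- The class `H̄₀` of members of `H̄₀²` extending holomorphically across the unit circle. -/
def MemH2bar0Ext (f : ℂ → ℂ) : Prop :=
  MemH2bar0 f ∧ ∃ ρ : ℝ, 0 < ρ ∧ ρ < 1 ∧ DifferentiableOn ℂ f {z : ℂ | ρ < ‖z‖}

/-- The polynomial `∑ c j X^j` of degree `< n`. -/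
def liftPoly (n : ℕ) (c : Fin n → ℂ) : ℂ[X] :=
  ∑ j : Fin n, Polynomial.C (c j) * Polynomial.X ^ (j : ℕ)

/-- The monic polynomial `X^n + ∑ d j X^j` with non-leading coefficients `d`. -/
def monicOf (n : ℕ) (d : Fin n → ℂ) : ℂ[X] := Polynomial.X ^ n + liftPoly n d

/-- `M_n`: monic polynomials of degree `n` with all `n` zeros in the open unit disk. -/
def MemMn (n : ℕ) (q : ℂ[X]) : Prop :=
  q.Monic ∧ q.natDegree = n ∧ ∀ z ∈ q.roots, ‖z‖ < 1

/-- The closure `M̄_n` of `M_n`: monic polynomials of degree `n` with all zeros in the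
closed unit disk. -/
def MemMnCl (n : ℕ) (q : ℂ[X]) : Prop :=
  q.Monic ∧ q.natDegree = n ∧ ∀ z ∈ q.roots, ‖z‖ ≤ 1

/-- The rational function `p/q` (with junk value `0` at poles). -/
def ratFun (p q : ℂ[X]) (z : ℂ) : ℂ := p.eval z / q.eval z

/-- `R_n = { p/q : p ∈ P_{n−1}, q ∈ M_n }`. -/
def MemRn (n : ℕ) (r : ℂ → ℂ) : Prop :=
  ∃ p q : ℂ[X], p.degree < (n : WithBot ℕ) ∧ MemMn n q ∧ r = ratFun p q

/-- Critical point of a real-valued map on a real normed space: all directional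
derivatives vanish. -/
def IsCritPt {E : Type*} [NormedAddCommGroup E] [NormedSpace ℝ E] (Φ : E → ℝ) (x : E) : Prop :=
  ∀ v : E, HasDerivAt (fun t : ℝ => Φ (x + t • v)) 0 0

/-- The error map `(p,q) ↦ ‖f − p/q‖₂²` in the coordinates given by the coefficients of `p`
and the non-leading coefficients of `q`. -/
def errFun (f : ℂ → ℂ) (n : ℕ) (pq : (Fin n → ℂ) × (Fin n → ℂ)) : ℝ :=
  circNormSq (fun z => f z - ratFun (liftPoly n pq.1) (monicOf n pq.2) z)

/-- `r ∈ R_n` is a critical point of `E_{f,n}` if `r = p/q` for some critical pair `(p,q)`. -/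
def IsCriticalPointE (f : ℂ → ℂ) (n : ℕ) (r : ℂ → ℂ) : Prop :=
  ∃ pq : (Fin n → ℂ) × (Fin n → ℂ), MemMn n (monicOf n pq.2) ∧
    IsCritPt (errFun f n) pq ∧ r = ratFun (liftPoly n pq.1) (monicOf n pq.2)

/-- `L/q` is the orthogonal projection of `f` onto `V_q = P_{n−1}/q`. -/
def IsOrthProjPoly (f : ℂ → ℂ) (n : ℕ) (q L : ℂ[X]) : Prop :=
  L.degree < (n : WithBot ℕ) ∧
    ∀ p : ℂ[X], p.degree < (n : WithBot ℕ) →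
      circInner (fun z => f z - ratFun L q z) (ratFun p q) = 0

/-- The polynomial `L_q ∈ P_{n−1}` such that `L_q/q` is the orthogonal projection of `f`
onto `V_q` (junk value `0` if it does not exist). -/
def Lpoly (f : ℂ → ℂ) (n : ℕ) (q : ℂ[X]) : ℂ[X] :=
  letI := Classical.propDecidable (∃ L, IsOrthProjPoly f n q L)
  if h : ∃ L, IsOrthProjPoly f n q L then h.choose else 0

/-- The map `φ_{f,n} : q ↦ ‖f − L_q/q‖₂²` in the coordinates given by the non-leading
coefficients of `q`. -/
def phiCoord (f : ℂ → ℂ) (n : ℕ) (d : Fin n → ℂ) : ℝ :=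
  circNormSq (fun z => f z - ratFun (Lpoly f n (monicOf n d)) (monicOf n d) z)

/-- `q ∈ M_n` is a critical point of `φ_{f,n}`. -/
def IsCriticalPhi (f : ℂ → ℂ) (n : ℕ) (q : ℂ[X]) : Prop :=
  ∃ d : Fin n → ℂ, monicOf n d = q ∧ IsCritPt (phiCoord f n) d

/-- `f^σ(z) = (1/z)·conj(f(1/conj z))`. -/
def sigmaFun (f : ℂ → ℂ) (z : ℂ) : ℂ := z⁻¹ * (starRingEnd ℂ) (f (((starRingEnd ℂ) z)⁻¹))

/-- `p̌(z) = conj(p(1/conj z))`. -/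
def checkFun (p : ℂ[X]) (z : ℂ) : ℂ := (starRingEnd ℂ) (p.eval (((starRingEnd ℂ) z)⁻¹))

/-- The reciprocal polynomial `q̃(z) = z^n·conj(q(1/conj z))` of a polynomial of degree `n`. -/
def recipPoly (n : ℕ) (q : ℂ[X]) : ℂ[X] := (q.map (starRingEnd ℂ)).reflect n

/-- The contour-integral extension of `u_q`:
`u_q(z) = (1/2πi)·∫_{|τ|=ρ} (f(τ)q(τ)/q̃(τ))·dτ/(z−τ)`. -/
def uExt (f : ℂ → ℂ) (ρ : ℝ) (n : ℕ) (q : ℂ[X]) (z : ℂ) : ℂ :=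
  (2 * Real.pi)⁻¹ * ∫ θ in (0:ℝ)..(2 * Real.pi),
    f (circ ρ θ) * q.eval (circ ρ θ) / (recipPoly n q).eval (circ ρ θ) * circ ρ θ /
      (z - circ ρ θ)

/-- The contour-integral extension of `L_q`:
`L_q(z) = (1/2πi)·∫_{|τ|=ρ} (f(τ)/q̃(τ))·(q(z)q̃(τ) − q̃(z)q(τ))/(z−τ)·dτ`. -/
def LExt (f : ℂ → ℂ) (ρ : ℝ) (n : ℕ) (q : ℂ[X]) (z : ℂ) : ℂ :=
  (2 * Real.pi)⁻¹ * ∫ θ in (0:ℝ)..(2 * Real.pi),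
    f (circ ρ θ) / (recipPoly n q).eval (circ ρ θ) *
      ((q.eval z * (recipPoly n q).eval (circ ρ θ) -
         (recipPoly n q).eval z * q.eval (circ ρ θ)) / (z - circ ρ θ)) * circ ρ θ

/-- The smooth extension of `φ_{f,n}`: `φ(q) = (1/2πi)∫_𝕋 u_q·u_q^σ dτ`. -/
def phiExt (f : ℂ → ℂ) (ρ : ℝ) (n : ℕ) (d : Fin n → ℂ) : ℝ :=
  ((2 * Real.pi)⁻¹ * ∫ θ in (0:ℝ)..(2 * Real.pi),
    uExt f ρ n (monicOf n d) (circ 1 θ) * sigmaFun (uExt f ρ n (monicOf n d)) (circ 1 θ) *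
      circ 1 θ).re

/-- The Hessian bilinear form of `Φ` at `x`. -/
def hessBil {E : Type*} [NormedAddCommGroup E] [NormedSpace ℝ E] (Φ : E → ℝ) (x v w : E) : ℝ :=
  iteratedFDeriv ℝ 2 Φ x ![v, w]

/-- The Hessian quadratic form of `Φ` at `x`. -/
def hessQ {E : Type*} [NormedAddCommGroup E] [NormedSpace ℝ E] (Φ : E → ℝ) (x v : E) : ℝ :=
  hessBil Φ x v v

/-- Nondegeneracy of the Hessian of `Φ` at `x`. -/
def HessNondeg {E : Type*} [NormedAddCommGroup E] [NormedSpace ℝ E] (Φ : E → ℝ) (x : E) : Prop :=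
  ∀ v : E, (∀ w : E, hessBil Φ x v w = 0) → v = 0

/-- The Morse index: the largest dimension of a subspace on which the Hessian quadratic
form is negative definite. -/
def morseIndex {E : Type*} [NormedAddCommGroup E] [NormedSpace ℝ E] (Φ : E → ℝ) (x : E) : ℕ :=
  sSup {k : ℕ | ∃ W : Submodule ℝ E, Module.finrank ℝ W = k ∧
    ∀ v ∈ W, v ≠ 0 → hessQ Φ x v < 0}

/-- `g(θ)` (a non-vanishing `2π`-periodic function on `𝕋`, parametrized by the angle) has
winding number `m` about the origin. -/
def HasWindingNumber (g : ℝ → ℂ) (m : ℤ) : Prop :=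
  ∃ r α : ℝ → ℝ, Continuous r ∧ Continuous α ∧ (∀ θ, 0 < r θ) ∧
    (∀ θ, g θ = (r θ : ℂ) * Complex.exp (α θ * Complex.I)) ∧
    α (2 * Real.pi) - α 0 = 2 * Real.pi * (m : ℝ)

/-- The density of the normalized arcsine distribution `ω` on `[a,b]` with respect to
Lebesgue measure. -/
def arcsineDens (a b t : ℝ) : ℝ := (Real.pi * Real.sqrt ((t - a) * (b - t)))⁻¹

/-- A complex measure of class `M`: `dμ = μ̇ dω` on `[a,b] ⊂ (−1,1)` with `μ̇`
Dini-continuous, non-vanishing, and with an argument of bounded variation. -/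
structure ClassM where
  a : ℝ
  b : ℝ
  density : ℝ → ℂ
  ha : -1 < a
  hab : a < b
  hb : b < 1
  nonvanish : ∀ t ∈ Set.Icc a b, density t ≠ 0
  dini : ∃ ω : ℝ → ℝ, (∀ t, 0 ≤ ω t) ∧ Monotone ω ∧
    (∀ s t : ℝ, s ∈ Set.Icc a b → t ∈ Set.Icc a b →
      ‖density s - density t‖ ≤ ω |s - t|) ∧
    ∃ ε : ℝ, 0 < ε ∧ IntervalIntegrable (fun t => ω t / t) volume 0 ε
  argBV : ∃ argf : ℝ → ℝ, BoundedVariationOn argf (Set.Icc a b) ∧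
    ∀ t ∈ Set.Icc a b, density t = (‖density t‖ : ℂ) * Complex.exp (argf t * Complex.I)

/-- The Cauchy transform `f_μ(z) = ∫ dμ(t)/(z−t)` of a measure `dμ = μ̇ dω` of class `M`. -/
def cauchyTransform (M : ClassM) (z : ℂ) : ℂ :=
  ∫ t in M.a..M.b, M.density t / (z - (t : ℂ)) * (arcsineDens M.a M.b t : ℂ)

/-- The segment `[a,b]` viewed as a subset of `ℂ`. -/
def segC (a b : ℝ) : Set ℂ := {z : ℂ | z.im = 0 ∧ z.re ∈ Set.Icc a b}

/-- `w(z) = √((z−a)(z−b))`: the branch holomorphic off `[a,b]` with `w(z)/z → 1` at `∞`. -/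
def IsBranchW (a b : ℝ) (w : ℂ → ℂ) : Prop :=
  DifferentiableOn ℂ w (segC a b)ᶜ ∧ (∀ z ∉ segC a b, (w z) ^ 2 = (z - (a:ℂ)) * (z - (b:ℂ))) ∧
    Tendsto (fun z => w z / z) (comap (fun z : ℂ => ‖z‖) atTop) (nhds 1)

/-- The conformal map `φ(z) = (2/(b−a))(z − (a+b)/2 − w(z))` of `C̄∖[a,b]` onto `𝔻`. -/
def joukMap (a b : ℝ) (w : ℂ → ℂ) (z : ℂ) : ℂ :=
  (2 / ((b : ℂ) - (a : ℂ))) * (z - ((a : ℂ) + (b : ℂ)) / 2 - w z)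

/-- The geometric mean `G_h = exp ∫ log h dω`, given a branch `Lh` of `log h` on `[a,b]`. -/
def geomMean (a b : ℝ) (Lh : ℝ → ℂ) : ℂ :=
  Complex.exp (∫ t in a..b, Lh t * (arcsineDens a b t : ℂ))

/-- The Szegő function `S_h`, given a branch `Lh` of `log h` on `[a,b]`. -/
def szego (a b : ℝ) (w : ℂ → ℂ) (Lh : ℝ → ℂ) (z : ℂ) : ℂ :=
  Complex.exp (w z / 2 * ∫ t in a..b, Lh t / (z - (t : ℂ)) * (arcsineDens a b t : ℂ)
    - (1 / 2) * ∫ t in a..b, Lh t * (arcsineDens a b t : ℂ))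

/-- An interpolation scheme: for each `n`, a multiset of `n` points. -/
structure InterpScheme where
  E : ℕ → Multiset ℂ
  card_eq : ∀ n, Multiset.card (E n) = n

/-- The support of an interpolation scheme. -/
def schemeSupp (S : InterpScheme) : Set ℂ :=
  ⋂ n : ℕ, closure (⋃ k : ℕ, ⋃ _ : n ≤ k, {z : ℂ | z ∈ S.E k})

/-- Admissibility of an interpolation scheme (relative to the conformal map `φmap` and the
domain `DF`). -/
def Admissible (S : InterpScheme) (φmap : ℂ → ℂ) (DF : Set ℂ) : Prop :=
  (∃ C : ℝ, ∀ n, (((S.E n).map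
      (fun e => ‖φmap e - φmap ((starRingEnd ℂ) e)‖)).sum ≤ C)) ∧
  schemeSupp S ⊆ DF ∧
  ∃ σ : Measure ℂ, IsProbabilityMeasure σ ∧
    Integrable (fun p : ℂ × ℂ => Real.log (‖p.1 - p.2‖)) (σ.prod σ) ∧
    ∀ g : ℂ → ℝ, Continuous g → HasCompactSupport g →
      Tendsto (fun n : ℕ => (((S.E n).map g).sum) / (n : ℝ)) atTop (nhds (∫ z, g z ∂σ))

/-- `R_n(E;z) = ∏_{e ∈ E_n} (φ(z)−φ(e))/(1−φ(z)φ(e))`. -/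
def RnFun (S : InterpScheme) (φmap : ℂ → ℂ) (n : ℕ) (z : ℂ) : ℂ :=
  ((S.E n).map (fun e => (φmap z - φmap e) / (1 - φmap z * φmap e))).prod

/-- The Blaschke-type product over a fixed multiset of points (used for the poles of the
rational summand `r`). -/
def RFun (P : Multiset ℂ) (φmap : ℂ → ℂ) (z : ℂ) : ℂ :=
  (P.map (fun e => (φmap z - φmap e) / (1 - φmap z * φmap e))).prod

/-- The (linearized) definition of the `n`-th diagonal multipoint Padé approximant
`p/ℓ` to `F` on `DF`, with interpolation polynomial `v` (one point being `∞`). -/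
def IsPade (F : ℂ → ℂ) (DF : Set ℂ) (v : ℂ[X]) (n : ℕ) (p ℓ : ℂ[X]) : Prop :=
  p.degree ≤ (n : WithBot ℕ) ∧ ℓ.degree ≤ (n : WithBot ℕ) ∧ ℓ ≠ 0 ∧
  ∃ g : ℂ → ℂ, DifferentiableOn ℂ g DF ∧
    (∀ z ∈ DF, (v.eval z) ^ 2 * g z = ℓ.eval z * F z - p.eval z) ∧
    ∃ C R : ℝ, ∀ z : ℂ, R ≤ ‖z‖ →
      ‖g z‖ ≤ C / ‖z‖ ^ (n + 1)


/-! ### Auxiliary development for the proof of `double_orthogonality`. -/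

section AuxDoubleOrth

open MeasureTheory Metric intervalIntegral

/-- The normalized Lebesgue measure domain used by `circInner`. -/
noncomputable def muc : Measure ℝ := volume.restrict (Set.Ioc (0:ℝ) (2*Real.pi))

lemma two_pi_pos : (0:ℝ) < 2 * Real.pi := by positivity

instance : IsFiniteMeasure muc := by
  constructor
  rw [muc, Measure.restrict_apply_univ, Real.volume_Ioc]
  exact ENNReal.ofReal_lt_top

lemma circ_one (θ : ℝ) : circ 1 θ = Complex.exp (θ * Complex.I) := by
  simp [circ]

lemma abs_circ_one (θ : ℝ) : ‖circ 1 θ‖ = 1 := by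
  rw [circ_one]; exact Complex.norm_exp_ofReal_mul_I θ

lemma continuous_circ_one : Continuous fun θ : ℝ => circ 1 θ := by
  simp only [circ_one]
  exact Complex.continuous_exp.comp ((Complex.continuous_ofReal).mul continuous_const)

lemma continuous_polyCirc (p : ℂ[X]) : Continuous fun θ : ℝ => p.eval (circ 1 θ) :=
  p.continuous.comp continuous_circ_one

/-- Every point of the unit circle has the form `circ 1 θ`. -/
lemma exists_circ_eq {z : ℂ} (hz : ‖z‖ = 1) : ∃ θ : ℝ, circ 1 θ = z := by
  refine ⟨Complex.arg z, ?_⟩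
  have := Complex.norm_mul_exp_arg_mul_I z
  rw [hz] at this
  simpa [circ_one] using this

lemma exists_circle_bound (p : ℂ[X]) :
    ∃ M : ℝ, 0 ≤ M ∧ ∀ z : ℂ, ‖z‖ = 1 → ‖p.eval z‖ ≤ M := by
  obtain ⟨z₀, hz₀, hmax⟩ := (isCompact_sphere (0:ℂ) 1).exists_isMaxOn
    ⟨1, by simp⟩ ((continuous_norm.comp p.continuous).continuousOn)
  refine ⟨‖p.eval z₀‖, by positivity, fun z hz => ?_⟩
  exact hmax (by simpa [mem_sphere_zero_iff_norm] using hz)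

lemma exists_circle_lb {q : ℂ[X]} (hq : ∀ z : ℂ, ‖z‖ = 1 → q.eval z ≠ 0) :
    ∃ m : ℝ, 0 < m ∧ ∀ z : ℂ, ‖z‖ = 1 → m ≤ ‖q.eval z‖ := by
  obtain ⟨z₀, hz₀, hmin⟩ := (isCompact_sphere (0:ℂ) 1).exists_isMinOn
    ⟨1, by simp⟩ ((continuous_norm.comp q.continuous).continuousOn)
  have hz₀' : ‖z₀‖ = 1 := by simpa [mem_sphere_zero_iff_norm] using hz₀
  refine ⟨‖q.eval z₀‖, ?_, fun z hz => hmin (by simpa [mem_sphere_zero_iff_norm] using hz)⟩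
  exact (norm_pos_iff.mpr (hq z₀ hz₀'))

lemma MemMn.eval_circle_ne {n : ℕ} {q : ℂ[X]} (hq : MemMn n q) :
    ∀ z : ℂ, ‖z‖ = 1 → q.eval z ≠ 0 := by
  intro z hz h
  have hmem : z ∈ q.roots := by
    rw [Polynomial.mem_roots hq.1.ne_zero]
    exact h
  have := hq.2.2 z hmem
  rw [hz] at this
  exact lt_irrefl 1 this

/-! ### `MemLp` and integrability lemmas -/

lemma memL2_of_bound {g : ℝ → ℂ} (hg : Continuous g) (M : ℝ)
    (hM : ∀ θ, ‖g θ‖ ≤ M) : MemLp g 2 muc :=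
  (memLp_top_of_bound hg.aestronglyMeasurable M
    (Filter.Eventually.of_forall (by simpa using hM))).mono_exponent
      le_top

lemma memL2_conj {g : ℝ → ℂ} (hg : MemLp g 2 muc) :
    MemLp (fun θ => (starRingEnd ℂ) (g θ)) 2 muc := by
  refine MemLp.of_le hg ((Complex.continuous_conj).comp_aestronglyMeasurable hg.1) ?_
  exact Filter.Eventually.of_forall fun θ => by simp

lemma integrable_mul2 {g h : ℝ → ℂ} (hg : MemLp g 2 muc) (hh : MemLp h 2 muc) :
    Integrable (fun θ => g θ * h θ) muc := by
  have h12 : (1 : ENNReal)/1 = 1/2 + 1/2 := by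
    rw [ENNReal.div_add_div_same]
    norm_num
    exact (ENNReal.div_self two_ne_zero ENNReal.ofNat_ne_top).symm
  have := MemLp.smul (p := 2) (q := 2) (r := 1) hh hg
  rw [memLp_one_iff_integrable] at this
  exact this

lemma intervalIntegrable_of_integrable {E : Type*} [NormedAddCommGroup E] {g : ℝ → E}
    (hg : Integrable g muc) : IntervalIntegrable g volume 0 (2*Real.pi) := by
  rw [intervalIntegrable_iff, Set.uIoc_of_le two_pi_pos.le]
  exact hg

lemma memL2_rat (p q' : ℂ[X]) (hq' : ∀ z : ℂ, ‖z‖ = 1 → q'.eval z ≠ 0) :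
    MemLp (fun θ => p.eval (circ 1 θ) / q'.eval (circ 1 θ)) 2 muc := by
  obtain ⟨m, hm, hmle⟩ := exists_circle_lb hq'
  obtain ⟨M, hM0, hM⟩ := exists_circle_bound p
  refine memL2_of_bound ?_ (M/m) ?_
  · exact (continuous_polyCirc p).div (continuous_polyCirc q')
      (fun θ => hq' _ (abs_circ_one θ))
  · intro θ
    rw [norm_div]
    exact div_le_div₀ hM0 (hM _ (abs_circ_one θ)) hm (hmle _ (abs_circ_one θ))

/-! ### `circInner` lemmas -/

lemma circInner_def' (g h : ℂ → ℂ) :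
    circInner g h
      = (2*Real.pi)⁻¹ * ∫ θ, g (circ 1 θ) * (starRingEnd ℂ) (h (circ 1 θ)) ∂muc := by
  rw [circInner, intervalIntegral.integral_of_le two_pi_pos.le]
  rfl

lemma circInner_add_left {g₁ g₂ h : ℂ → ℂ}
    (h1 : Integrable (fun θ => g₁ (circ 1 θ) * (starRingEnd ℂ) (h (circ 1 θ))) muc)
    (h2 : Integrable (fun θ => g₂ (circ 1 θ) * (starRingEnd ℂ) (h (circ 1 θ))) muc) :
    circInner (fun z => g₁ z + g₂ z) h = circInner g₁ h + circInner g₂ h := by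
  simp only [circInner_def']
  rw [← mul_add, ← integral_add h1 h2]
  congr 1
  apply MeasureTheory.integral_congr_ae
  filter_upwards with θ
  ring

lemma circInner_conj_symm (g h : ℂ → ℂ) :
    circInner g h = (starRingEnd ℂ) (circInner h g) := by
  simp only [circInner_def']
  rw [map_mul, ← integral_conj]
  congr 1
  · exact (Complex.conj_ofReal _).symm
  · apply MeasureTheory.integral_congr_ae
    filter_upwards with θ
    rw [map_mul]
    simp [mul_comm]

lemma circInner_smul_left (a : ℂ) (g h : ℂ → ℂ) :
    circInner (fun z => a * g z) h = a * circInner g h := by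
  have key : (∫ θ in (0:ℝ)..(2*Real.pi), (a * g (circ 1 θ)) * (starRingEnd ℂ) (h (circ 1 θ)))
      = a * ∫ θ in (0:ℝ)..(2*Real.pi), g (circ 1 θ) * (starRingEnd ℂ) (h (circ 1 θ)) := by
    rw [← intervalIntegral.integral_const_mul]
    apply intervalIntegral.integral_congr
    intro θ _
    ring
  simp only [circInner]
  rw [key]
  ring

lemma circNormSq_nonneg (g : ℂ → ℂ) : 0 ≤ circNormSq g := by
  rw [circNormSq, circInner]
  have h1 : (∫ θ in (0:ℝ)..(2*Real.pi), g (circ 1 θ) * (starRingEnd ℂ) (g (circ 1 θ)))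
      = ((∫ θ in (0:ℝ)..(2*Real.pi), Complex.normSq (g (circ 1 θ)) : ℝ) : ℂ) := by
    rw [← intervalIntegral.integral_ofReal]
    apply intervalIntegral.integral_congr
    intro θ _
    exact Complex.mul_conj _
  rw [h1]
  have h2 : ((2*Real.pi)⁻¹ * ((∫ θ in (0:ℝ)..(2*Real.pi), Complex.normSq (g (circ 1 θ)) : ℝ) : ℂ))
      = (((2*Real.pi)⁻¹ * ∫ θ in (0:ℝ)..(2*Real.pi), Complex.normSq (g (circ 1 θ)) : ℝ) : ℂ) := by
    push_cast
    ring
  rw [h2, Complex.ofReal_re]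
  have h3 : 0 ≤ ∫ θ in (0:ℝ)..(2*Real.pi), Complex.normSq (g (circ 1 θ)) :=
    intervalIntegral.integral_nonneg two_pi_pos.le (fun θ _ => Complex.normSq_nonneg _)
  positivity

/-! ### `liftPoly` and `monicOf` lemmas -/

lemma liftPoly_coeff (n : ℕ) (c : Fin n → ℂ) (k : ℕ) :
    (liftPoly n c).coeff k = if h : k < n then c ⟨k, h⟩ else 0 := by
  rw [liftPoly, Polynomial.finset_sum_coeff]
  simp only [Polynomial.coeff_C_mul, Polynomial.coeff_X_pow]
  by_cases h : k < n
  · rw [dif_pos h, Finset.sum_eq_single (⟨k, h⟩ : Fin n)]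
    · simp
    · intro j _ hj
      have hkj : ¬ (k = (j:ℕ)) := by
        intro hk
        exact hj (Fin.ext hk.symm)
      simp [hkj]
    · intro hmem
      exact absurd (Finset.mem_univ _) hmem
  · rw [dif_neg h]
    apply Finset.sum_eq_zero
    intro j _
    have hkj : ¬ (k = (j:ℕ)) := by
      intro hk
      exact h (hk ▸ j.2)
    simp [hkj]

lemma liftPoly_eval (n : ℕ) (c : Fin n → ℂ) (z : ℂ) :
    (liftPoly n c).eval z = ∑ j : Fin n, c j * z ^ (j:ℕ) := by
  rw [liftPoly, Polynomial.eval_finset_sum]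
  simp

lemma liftPoly_degree_lt (n : ℕ) (c : Fin n → ℂ) :
    (liftPoly n c).degree < (n : WithBot ℕ) := by
  apply lt_of_le_of_lt (Polynomial.degree_sum_le _ _)
  rw [Finset.sup_lt_iff (by exact_mod_cast WithBot.bot_lt_coe n)]
  intro j _
  exact lt_of_le_of_lt (Polynomial.degree_C_mul_X_pow_le _ _) (by exact_mod_cast j.2)

lemma eq_liftPoly_of_degree_lt {n : ℕ} {p : ℂ[X]} (hp : p.degree < (n : WithBot ℕ)) :
    p = liftPoly n (fun j => p.coeff (j : ℕ)) := by
  ext k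
  rw [liftPoly_coeff]
  split_ifs with h
  · rfl
  · exact Polynomial.coeff_eq_zero_of_degree_lt
      (lt_of_lt_of_le hp (by exact_mod_cast Nat.le_of_not_lt h))

lemma liftPoly_add (n : ℕ) (c d : Fin n → ℂ) :
    liftPoly n (c + d) = liftPoly n c + liftPoly n d := by
  rw [liftPoly, liftPoly, liftPoly, ← Finset.sum_add_distrib]
  apply Finset.sum_congr rfl
  intro j _
  rw [Pi.add_apply, map_add, add_mul]

lemma liftPoly_smul_eval (n : ℕ) (a : ℂ) (c : Fin n → ℂ) (z : ℂ) :
    (liftPoly n (a • c)).eval z = a * (liftPoly n c).eval z := by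
  rw [liftPoly_eval, liftPoly_eval, Finset.mul_sum]
  apply Finset.sum_congr rfl
  intro j _
  simp [mul_assoc]

lemma monicOf_eval_add_smul (n : ℕ) (d v : Fin n → ℂ) (t : ℝ) (z : ℂ) :
    (monicOf n (d + t • v)).eval z
      = (monicOf n d).eval z + (t : ℂ) * (liftPoly n v).eval z := by
  simp only [monicOf, Polynomial.eval_add, Polynomial.eval_pow, Polynomial.eval_X,
    liftPoly_eval, Pi.add_apply, Pi.smul_apply, Complex.real_smul]
  rw [Finset.mul_sum, add_assoc, ← Finset.sum_add_distrib]
  congr 1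
  apply Finset.sum_congr rfl
  intro j _
  ring

/-! ### Vanishing lemmas -/

lemma continuous_eq_zero_of_ae_zero {g : ℝ → ℝ} (hg : Continuous g) (h : g =ᵐ[muc] 0) :
    ∀ θ ∈ Set.Ioo (0:ℝ) (2*Real.pi), g θ = 0 := by
  intro θ hθ
  by_contra hne
  have hU : IsOpen {x : ℝ | g x ≠ 0} := by
    have : {x : ℝ | g x ≠ 0} = g ⁻¹' ({0}ᶜ) := rfl
    rw [this]
    exact hg.isOpen_preimage _ isOpen_compl_singleton
  have h0 : muc {x | g x ≠ 0} = 0 := by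
    rw [Filter.EventuallyEq, MeasureTheory.ae_iff] at h
    simpa using h
  have h0' : volume ({x | g x ≠ 0} ∩ Set.Ioc 0 (2*Real.pi)) = 0 := by
    rw [muc, Measure.restrict_apply hU.measurableSet] at h0
    exact h0
  have hsub : {x | g x ≠ 0} ∩ Set.Ioo 0 (2*Real.pi)
      ⊆ {x | g x ≠ 0} ∩ Set.Ioc 0 (2*Real.pi) :=
    Set.inter_subset_inter_right _ Set.Ioo_subset_Ioc_self
  have hpos : 0 < volume ({x | g x ≠ 0} ∩ Set.Ioo 0 (2*Real.pi)) :=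
    (hU.inter isOpen_Ioo).measure_pos volume ⟨θ, hne, hθ⟩
  exact absurd (measure_mono_null hsub h0') hpos.ne'

lemma circ_injOn : Set.InjOn (fun θ : ℝ => circ 1 θ) (Set.Ioo 0 (2*Real.pi)) := by
  intro a ha b hb hab
  simp only [circ_one] at hab
  have h1 : Complex.exp ((a : ℂ) * Complex.I - (b:ℂ) * Complex.I) = 1 := by
    rw [Complex.exp_sub, hab, div_self (Complex.exp_ne_zero _)]
  rw [Complex.exp_eq_one_iff] at h1
  obtain ⟨k, hk⟩ := h1
  have h2 : (a : ℂ) - b = (k:ℂ) * (2 * Real.pi) := by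
    have hI : ((a:ℂ) - b) * Complex.I = ((k:ℂ) * (2*Real.pi)) * Complex.I := by
      rw [sub_mul, hk]
      ring
    exact mul_right_cancel₀ Complex.I_ne_zero hI
  have h3 : a - b = (k:ℝ) * (2*Real.pi) := by exact_mod_cast h2
  have h4 : |a - b| < 2*Real.pi := by
    rw [abs_lt]
    exact ⟨by linarith [ha.1, ha.2, hb.1, hb.2], by linarith [ha.1, ha.2, hb.1, hb.2]⟩
  have h5 : |(k:ℝ)| < 1 := by
    rw [h3, abs_mul, abs_of_pos two_pi_pos] at h4
    by_contra hge
    push_neg at hge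
    nlinarith [two_pi_pos]
  have h6 : k = 0 := by
    apply Int.abs_lt_one_iff.mp
    exact_mod_cast (by rwa [Int.cast_abs] : ((|k| : ℤ):ℝ) < 1)
  rw [h6] at h3
  simp at h3
  linarith

lemma poly_eq_zero_of_circle_roots {p : ℂ[X]}
    (hp : ∀ θ ∈ Set.Ioo (0:ℝ) (2*Real.pi), p.eval (circ 1 θ) = 0) : p = 0 := by
  apply Polynomial.eq_zero_of_infinite_isRoot
  have hinf : ((fun θ : ℝ => circ 1 θ) '' Set.Ioo 0 (2*Real.pi)).Infinite :=
    Set.Infinite.image circ_injOn (Set.Ioo_infinite two_pi_pos)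
  apply Set.Infinite.mono ?_ hinf
  rintro z ⟨θ, hθ, rfl⟩
  exact hp θ hθ

/-! ### Integral helper -/

lemma integral_cmul (a : ℂ) (F : ℝ → ℂ) :
    ∫ θ, a * F θ ∂muc = a * ∫ θ, F θ ∂muc := by
  simpa [smul_eq_mul] using MeasureTheory.integral_smul (μ := muc) a F

/-! ### Existence of the orthogonal projection -/

lemma exists_orthProj (f : ℂ → ℂ) (hf2 : MemLp (fun θ => f (circ 1 θ)) 2 muc)
    (n : ℕ) (q' : ℂ[X]) (hq' : ∀ z : ℂ, ‖z‖ = 1 → q'.eval z ≠ 0) :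
    ∃ L, IsOrthProjPoly f n q' L := by
  classical
  set bas : Fin n → ℝ → ℂ := fun j θ => (circ 1 θ)^(j:ℕ) / q'.eval (circ 1 θ) with hbas
  have hbasL2 : ∀ j : Fin n, MemLp (bas j) 2 muc := by
    intro j
    have := memL2_rat (Polynomial.X ^ (j:ℕ)) q' hq'
    simpa [hbas, Polynomial.eval_pow] using this
  have hratL2 : ∀ p : ℂ[X], MemLp (fun θ => p.eval (circ 1 θ) / q'.eval (circ 1 θ)) 2 muc :=
    fun p => memL2_rat p q' hq'
  have hint : ∀ (g : ℝ → ℂ), MemLp g 2 muc → ∀ j : Fin n,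
      Integrable (fun θ => g θ * (starRingEnd ℂ) (bas j θ)) muc :=
    fun g hg j => integrable_mul2 hg (memL2_conj (hbasL2 j))
  have expand : ∀ (g : ℝ → ℂ), MemLp g 2 muc → ∀ p : ℂ[X], p.degree < (n : WithBot ℕ) →
      (∫ θ, g θ * (starRingEnd ℂ) (p.eval (circ 1 θ) / q'.eval (circ 1 θ)) ∂muc)
        = ∑ j : Fin n, (starRingEnd ℂ) (p.coeff (j:ℕ))
            * ∫ θ, g θ * (starRingEnd ℂ) (bas j θ) ∂muc := by
    intro g hg p hp
    have key : ∀ θ, g θ * (starRingEnd ℂ) (p.eval (circ 1 θ) / q'.eval (circ 1 θ))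
        = ∑ j : Fin n, (starRingEnd ℂ) (p.coeff (j:ℕ)) * (g θ * (starRingEnd ℂ) (bas j θ)) := by
      intro θ
      have hrep : p.eval (circ 1 θ) / q'.eval (circ 1 θ)
          = ∑ j : Fin n, p.coeff (j:ℕ) * bas j θ := by
        conv_lhs => rw [eq_liftPoly_of_degree_lt hp]
        rw [liftPoly_eval, Finset.sum_div]
        apply Finset.sum_congr rfl
        intro j _
        rw [mul_div_assoc]
      rw [hrep, map_sum, Finset.mul_sum]
      apply Finset.sum_congr rfl
      intro j _
      rw [map_mul]
      ring
    simp_rw [key]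
    rw [MeasureTheory.integral_finset_sum]
    · apply Finset.sum_congr rfl
      intro j _
      exact integral_cmul _ _
    · intro j _
      exact (hint g hg j).const_mul _
  set T : (Fin n → ℂ) →ₗ[ℂ] (Fin n → ℂ) :=
    { toFun := fun c j => ∫ θ, ((liftPoly n c).eval (circ 1 θ) / q'.eval (circ 1 θ))
          * (starRingEnd ℂ) (bas j θ) ∂muc
      map_add' := by
        intro c d
        funext j
        rw [Pi.add_apply,
          ← MeasureTheory.integral_add (hint _ (hratL2 _) j) (hint _ (hratL2 _) j)]
        apply MeasureTheory.integral_congr_ae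
        filter_upwards with θ
        rw [liftPoly_add, Polynomial.eval_add, add_div, add_mul]
      map_smul' := by
        intro a c
        funext j
        simp only [RingHom.id_apply, Pi.smul_apply, smul_eq_mul]
        rw [← integral_cmul]
        apply MeasureTheory.integral_congr_ae
        filter_upwards with θ
        rw [liftPoly_smul_eval, mul_div_assoc, mul_assoc] } with hT
  have hTapp : ∀ c j, T c j = ∫ θ, ((liftPoly n c).eval (circ 1 θ) / q'.eval (circ 1 θ))
      * (starRingEnd ℂ) (bas j θ) ∂muc := fun c j => rfl
  have hTinj : Function.Injective T := by
    rw [injective_iff_map_eq_zero]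
    intro c hc
    set P := liftPoly n c with hP
    have hPqc : Continuous fun θ => P.eval (circ 1 θ) / q'.eval (circ 1 θ) :=
      (continuous_polyCirc P).div (continuous_polyCirc q') (fun θ => hq' _ (abs_circ_one θ))
    have h0 : (∫ θ, (P.eval (circ 1 θ) / q'.eval (circ 1 θ))
        * (starRingEnd ℂ) (P.eval (circ 1 θ) / q'.eval (circ 1 θ)) ∂muc) = 0 := by
      rw [expand _ (hratL2 P) P (liftPoly_degree_lt n c)]
      apply Finset.sum_eq_zero
      intro j _
      rw [← hTapp c j, congrFun hc j]
      simp
    set r : ℝ → ℝ := fun θ => Complex.normSq (P.eval (circ 1 θ) / q'.eval (circ 1 θ)) with hr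
    have hrc : Continuous r := Complex.continuous_normSq.comp hPqc
    have h1' : (∫ θ, r θ ∂muc) = 0 := by
      have hint2 : Integrable (fun θ => (P.eval (circ 1 θ) / q'.eval (circ 1 θ))
          * (starRingEnd ℂ) (P.eval (circ 1 θ) / q'.eval (circ 1 θ))) muc :=
        integrable_mul2 (hratL2 P) (memL2_conj (hratL2 P))
      have h2 : (∫ θ, ((P.eval (circ 1 θ) / q'.eval (circ 1 θ))
          * (starRingEnd ℂ) (P.eval (circ 1 θ) / q'.eval (circ 1 θ))).re ∂muc) = 0 := by
        have h3 := _root_.integral_re hint2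
        rw [h0] at h3
        simpa using h3
      rw [← h2]
      apply MeasureTheory.integral_congr_ae
      filter_upwards with θ
      rw [Complex.mul_conj, Complex.ofReal_re]
    have hrint : Integrable r muc := by
      rw [muc]
      exact hrc.integrableOn_Ioc
    have hrae : r =ᵐ[muc] 0 :=
      (MeasureTheory.integral_eq_zero_iff_of_nonneg
        (fun θ => Complex.normSq_nonneg _) hrint).mp h1'
    have hPz : ∀ θ ∈ Set.Ioo (0:ℝ) (2*Real.pi), P.eval (circ 1 θ) = 0 := by
      intro θ hθ
      have hv := continuous_eq_zero_of_ae_zero hrc hrae θ hθ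
      rw [hr] at hv
      have := Complex.normSq_eq_zero.mp hv
      rcases div_eq_zero_iff.mp this with h | h
      · exact h
      · exact absurd h (hq' _ (abs_circ_one θ))
    have hP0 : P = 0 := poly_eq_zero_of_circle_roots hPz
    funext j
    have hcj := congrArg (fun p : ℂ[X] => p.coeff (j:ℕ)) hP0
    simp only [hP, liftPoly_coeff, Polynomial.coeff_zero] at hcj
    rw [dif_pos j.2] at hcj
    simpa using hcj
  obtain ⟨c, hc⟩ := (LinearMap.injective_iff_surjective.mp hTinj)
    (fun j => ∫ θ, f (circ 1 θ) * (starRingEnd ℂ) (bas j θ) ∂muc)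
  refine ⟨liftPoly n c, liftPoly_degree_lt n c, ?_⟩
  intro p hp
  rw [circInner_def']
  simp only [ratFun]
  have hsub : Integrable (fun θ => f (circ 1 θ)
      * (starRingEnd ℂ) (p.eval (circ 1 θ) / q'.eval (circ 1 θ))) muc :=
    integrable_mul2 hf2 (memL2_conj (hratL2 p))
  have hsub2 : Integrable (fun θ => ((liftPoly n c).eval (circ 1 θ) / q'.eval (circ 1 θ))
      * (starRingEnd ℂ) (p.eval (circ 1 θ) / q'.eval (circ 1 θ))) muc :=
    integrable_mul2 (hratL2 _) (memL2_conj (hratL2 p))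
  have hzero : (∫ θ, (f (circ 1 θ) - (liftPoly n c).eval (circ 1 θ) / q'.eval (circ 1 θ))
      * (starRingEnd ℂ) (p.eval (circ 1 θ) / q'.eval (circ 1 θ)) ∂muc) = 0 := by
    have hsplit : (fun θ => (f (circ 1 θ) - (liftPoly n c).eval (circ 1 θ) / q'.eval (circ 1 θ))
        * (starRingEnd ℂ) (p.eval (circ 1 θ) / q'.eval (circ 1 θ)))
        = fun θ => f (circ 1 θ) * (starRingEnd ℂ) (p.eval (circ 1 θ) / q'.eval (circ 1 θ))
          - ((liftPoly n c).eval (circ 1 θ) / q'.eval (circ 1 θ))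
            * (starRingEnd ℂ) (p.eval (circ 1 θ) / q'.eval (circ 1 θ)) := by
      funext θ
      ring
    rw [hsplit, MeasureTheory.integral_sub hsub hsub2,
      expand _ hf2 p hp, expand _ (hratL2 _) p hp]
    rw [sub_eq_zero]
    apply Finset.sum_congr rfl
    intro j _
    rw [← hTapp c j, congrFun hc j]
  rw [hzero, mul_zero]

/-! ### The projection `Lpoly` and its minimality -/

lemma lpoly_spec (f : ℂ → ℂ) (hf2 : MemLp (fun θ => f (circ 1 θ)) 2 muc)
    (n : ℕ) (q' : ℂ[X]) (hq' : ∀ z : ℂ, ‖z‖ = 1 → q'.eval z ≠ 0) :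
    IsOrthProjPoly f n q' (Lpoly f n q') := by
  have hex := exists_orthProj f hf2 n q' hq'
  unfold Lpoly
  rw [dif_pos hex]
  exact hex.choose_spec

lemma circNormSq_add_of_orth {e w : ℂ → ℂ}
    (he : MemLp (fun θ => e (circ 1 θ)) 2 muc) (hw : MemLp (fun θ => w (circ 1 θ)) 2 muc)
    (horth : circInner e w = 0) :
    circNormSq (fun z => e z + w z) = circNormSq e + circNormSq w := by
  have hee : Integrable (fun θ => e (circ 1 θ) * (starRingEnd ℂ) (e (circ 1 θ))) muc :=
    integrable_mul2 he (memL2_conj he)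
  have hew : Integrable (fun θ => e (circ 1 θ) * (starRingEnd ℂ) (w (circ 1 θ))) muc :=
    integrable_mul2 he (memL2_conj hw)
  have hwe : Integrable (fun θ => w (circ 1 θ) * (starRingEnd ℂ) (e (circ 1 θ))) muc :=
    integrable_mul2 hw (memL2_conj he)
  have hww : Integrable (fun θ => w (circ 1 θ) * (starRingEnd ℂ) (w (circ 1 θ))) muc :=
    integrable_mul2 hw (memL2_conj hw)
  have key : circInner (fun z => e z + w z) (fun z => e z + w z)
      = circInner e e + circInner e w + circInner w e + circInner w w := by
    simp only [circInner_def']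
    have h4 : (∫ θ, (e (circ 1 θ) + w (circ 1 θ))
        * (starRingEnd ℂ) (e (circ 1 θ) + w (circ 1 θ)) ∂muc)
        = ∫ θ, (e (circ 1 θ) * (starRingEnd ℂ) (e (circ 1 θ))
            + (e (circ 1 θ) * (starRingEnd ℂ) (w (circ 1 θ))
            + (w (circ 1 θ) * (starRingEnd ℂ) (e (circ 1 θ))
            + w (circ 1 θ) * (starRingEnd ℂ) (w (circ 1 θ))))) ∂muc := by
      apply MeasureTheory.integral_congr_ae
      filter_upwards with θ
      rw [map_add]
      ring
    have hsum2 : Integrable (fun θ => w (circ 1 θ) * (starRingEnd ℂ) (e (circ 1 θ))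
        + w (circ 1 θ) * (starRingEnd ℂ) (w (circ 1 θ))) muc := hwe.add hww
    have hsum1 : Integrable (fun θ => e (circ 1 θ) * (starRingEnd ℂ) (w (circ 1 θ))
        + (w (circ 1 θ) * (starRingEnd ℂ) (e (circ 1 θ))
          + w (circ 1 θ) * (starRingEnd ℂ) (w (circ 1 θ)))) muc := hew.add hsum2
    rw [h4, MeasureTheory.integral_add hee hsum1, MeasureTheory.integral_add hew hsum2,
      MeasureTheory.integral_add hwe hww]
    ring
  have hwe0 : circInner w e = 0 := by
    rw [circInner_conj_symm, horth, map_zero]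
  rw [circNormSq, key, horth, hwe0]
  simp [circNormSq]

lemma lpoly_min (f : ℂ → ℂ) (hf2 : MemLp (fun θ => f (circ 1 θ)) 2 muc)
    (n : ℕ) (q' : ℂ[X]) (hq' : ∀ z : ℂ, ‖z‖ = 1 → q'.eval z ≠ 0)
    (L₀ : ℂ[X]) (hL₀ : L₀.degree < (n : WithBot ℕ)) :
    circNormSq (fun z => f z - ratFun (Lpoly f n q') q' z)
      ≤ circNormSq (fun z => f z - ratFun L₀ q' z) := by
  have hspec := lpoly_spec f hf2 n q' hq'
  set Lt := Lpoly f n q' with hLt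
  have hdeg : (Lt - L₀).degree < (n : WithBot ℕ) :=
    lt_of_le_of_lt (Polynomial.degree_sub_le _ _) (max_lt hspec.1 hL₀)
  have horth := hspec.2 (Lt - L₀) hdeg
  have hpt : (fun z => f z - ratFun L₀ q' z)
      = fun z => (f z - ratFun Lt q' z) + ratFun (Lt - L₀) q' z := by
    funext z
    simp only [ratFun, Polynomial.eval_sub, sub_div]
    ring
  rw [hpt]
  have heL2 : MemLp (fun θ => f (circ 1 θ) - ratFun Lt q' (circ 1 θ)) 2 muc :=
    hf2.sub (memL2_rat Lt q' hq')
  have hwL2 : MemLp (fun θ => ratFun (Lt - L₀) q' (circ 1 θ)) 2 muc :=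
    memL2_rat (Lt - L₀) q' hq'
  have hexp := circNormSq_add_of_orth (e := fun z => f z - ratFun Lt q' z)
    (w := ratFun (Lt - L₀) q') heL2 hwL2 horth
  rw [hexp]
  have := circNormSq_nonneg (ratFun (Lt - L₀) q')
  linarith

/-! ### Bézout decomposition -/

lemma bezout_decomp {L q : ℂ[X]} {n : ℕ} (hco : IsCoprime L q) (hmon : q.Monic)
    (hdeg : q.natDegree = n) (hL : L.degree < (n : WithBot ℕ)) (p : ℂ[X])
    (hp : p.degree < ((2 * n : ℕ) : WithBot ℕ)) :
    ∃ a b : ℂ[X], a.degree < (n : WithBot ℕ) ∧ b.degree < (n : WithBot ℕ)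
      ∧ p = a * q + b * L := by
  obtain ⟨u, v, huv⟩ := hco
  set b := (u * p) %ₘ q with hb
  have hqdeg : q.degree = (n : WithBot ℕ) := by
    rw [Polynomial.degree_eq_natDegree hmon.ne_zero, hdeg]
  have hbdeg : b.degree < (n : WithBot ℕ) := by
    rw [← hqdeg]
    exact Polynomial.degree_modByMonic_lt (u*p) hmon
  set a := p * v + ((u * p) /ₘ q) * L with ha
  have key : p = a * q + b * L := by
    have h1 : b = u*p - q * ((u*p) /ₘ q) := by
      rw [hb, eq_sub_iff_add_eq, Polynomial.modByMonic_add_div (u*p) q]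
    calc p = p * (u * L + v * q) := by rw [huv, mul_one]
    _ = a * q + b * L := by rw [h1, ha]; ring
  have hbL2 : (b * L).degree < ((2*n : ℕ) : WithBot ℕ) := by
    rcases eq_or_ne b 0 with hb0 | hb0
    · rw [hb0, zero_mul, Polynomial.degree_zero]
      exact_mod_cast WithBot.bot_lt_coe (2*n)
    rcases eq_or_ne L 0 with hL0 | hL0
    · rw [hL0, mul_zero, Polynomial.degree_zero]
      exact_mod_cast WithBot.bot_lt_coe (2*n)
    rw [Polynomial.degree_mul, Polynomial.degree_eq_natDegree hb0,
      Polynomial.degree_eq_natDegree hL0]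
    have h1 : b.natDegree < n := (Polynomial.natDegree_lt_iff_degree_lt hb0).mpr hbdeg
    have h2 : L.natDegree < n := (Polynomial.natDegree_lt_iff_degree_lt hL0).mpr hL
    exact_mod_cast (by omega : b.natDegree + L.natDegree < 2*n)
  have hadeg : a.degree < (n : WithBot ℕ) := by
    have haq : a * q = p - b * L := by rw [key]; ring
    have haqdeg : (a * q).degree < ((2*n:ℕ) : WithBot ℕ) := by
      rw [haq]
      exact lt_of_le_of_lt (Polynomial.degree_sub_le _ _) (max_lt hp hbL2)
    rcases eq_or_ne a 0 with ha0 | ha0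
    · rw [ha0, Polynomial.degree_zero]
      exact_mod_cast WithBot.bot_lt_coe n
    · rw [Polynomial.degree_mul, hqdeg, Polynomial.degree_eq_natDegree ha0] at haqdeg
      rw [Polynomial.degree_eq_natDegree ha0]
      have h3 : a.natDegree + n < 2*n := by exact_mod_cast haqdeg
      exact_mod_cast (by omega : a.natDegree < n)
  exact ⟨a, b, hadeg, hbdeg, key⟩

/-! ### The key consequence of criticality -/

lemma crit_orth (f : ℂ → ℂ) (hf2 : MemLp (fun θ => f (circ 1 θ)) 2 muc) (n : ℕ)
    (q : ℂ[X]) (hq : MemMn n q) (d : Fin n → ℂ) (hd : monicOf n d = q)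
    (hL : IsOrthProjPoly f n q (Lpoly f n q))
    (hIsCrit : IsCritPt (phiCoord f n) d) (v : Fin n → ℂ) :
    (circInner (fun z => (Lpoly f n q).eval z * (liftPoly n v).eval z / (q.eval z)^2)
      (fun z => f z - ratFun (Lpoly f n q) q z)).re = 0 := by
  classical
  set L₀ := Lpoly f n q with hL₀
  set b := liftPoly n v with hbv
  have hqne := MemMn.eval_circle_ne hq
  obtain ⟨m, hm, hmle⟩ := exists_circle_lb hqne
  obtain ⟨MB, hMB0, hMB⟩ := exists_circle_bound b
  obtain ⟨ML, hML0, hML⟩ := exists_circle_bound L₀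
  set δ := m / (2 * (MB + 1)) with hδdef
  have hδ : 0 < δ := by positivity
  have hden : ∀ t : ℝ, |t| < δ → ∀ z : ℂ, ‖z‖ = 1 →
      m/2 ≤ ‖q.eval z + (t:ℂ) * b.eval z‖ := by
    intro t ht z hz
    have h1 : ‖(t:ℂ) * b.eval z‖ ≤ δ * MB := by
      rw [norm_mul, Complex.norm_real, Real.norm_eq_abs]
      exact mul_le_mul ht.le (hMB z hz) (norm_nonneg _) hδ.le
    have h2 : δ * MB ≤ m/2 := by
      rw [hδdef, div_mul_eq_mul_div, div_le_div_iff₀ (by positivity) (by norm_num : (0:ℝ) < 2)]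
      nlinarith
    have h3 : ‖q.eval z‖
        ≤ ‖q.eval z + (t:ℂ) * b.eval z‖ + ‖(t:ℂ) * b.eval z‖ := by
      have h4 := norm_sub_le (q.eval z + (t:ℂ) * b.eval z) ((t:ℂ) * b.eval z)
      rw [add_sub_cancel_right] at h4
      simpa using h4
    linarith [hmle z hz]
  have hdenne : ∀ t : ℝ, |t| < δ → ∀ z : ℂ, ‖z‖ = 1 →
      q.eval z + (t:ℂ) * b.eval z ≠ 0 := by
    intro t ht z hz h0
    have h5 := hden t ht z hz
    rw [h0] at h5
    simp only [norm_zero] at h5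
    linarith
  set G : ℝ → ℝ → ℂ := fun t θ =>
    f (circ 1 θ) - L₀.eval (circ 1 θ) / (q.eval (circ 1 θ) + (t:ℂ) * b.eval (circ 1 θ)) with hG
  set Gd : ℝ → ℝ → ℂ := fun t θ =>
    L₀.eval (circ 1 θ) * b.eval (circ 1 θ)
      / (q.eval (circ 1 θ) + (t:ℂ) * b.eval (circ 1 θ))^2 with hGd
  set F : ℝ → ℝ → ℂ := fun t θ => G t θ * (starRingEnd ℂ) (G t θ) with hF
  set F' : ℝ → ℝ → ℂ := fun t θ =>
    Gd t θ * (starRingEnd ℂ) (G t θ) + G t θ * (starRingEnd ℂ) (Gd t θ) with hF'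
  have hGderiv : ∀ θ : ℝ, ∀ t : ℝ, |t| < δ → HasDerivAt (fun s => G s θ) (Gd t θ) t := by
    intro θ t ht
    have hne := hdenne t ht _ (abs_circ_one θ)
    have h0 : HasDerivAt (fun s : ℝ => (s:ℂ)) 1 t := by
      simpa using (hasDerivAt_id t).ofReal_comp
    have h1 : HasDerivAt (fun s : ℝ => q.eval (circ 1 θ) + (s:ℂ) * b.eval (circ 1 θ))
        (b.eval (circ 1 θ)) t := by
      simpa using (h0.mul_const (b.eval (circ 1 θ))).const_add (q.eval (circ 1 θ))
    have h2 := (hasDerivAt_const t (L₀.eval (circ 1 θ))).div h1 hne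
    have h3 := h2.const_sub (f (circ 1 θ))
    refine h3.congr_deriv ?_
    simp only [hGd]
    ring
  have hGconj : ∀ θ : ℝ, ∀ t : ℝ, |t| < δ →
      HasDerivAt (fun s => (starRingEnd ℂ) (G s θ)) ((starRingEnd ℂ) (Gd t θ)) t := by
    intro θ t ht
    exact (hGderiv θ t ht).star
  have hFderiv : ∀ θ : ℝ, ∀ t : ℝ, |t| < δ → HasDerivAt (fun s => F s θ) (F' t θ) t := by
    intro θ t ht
    exact (hGderiv θ t ht).mul (hGconj θ t ht)
  have hbcont := continuous_polyCirc b
  have hqcont := continuous_polyCirc q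
  have hLcont := continuous_polyCirc L₀
  have hdencont : ∀ t : ℝ, Continuous (fun θ => q.eval (circ 1 θ) + (t:ℂ) * b.eval (circ 1 θ)) :=
    fun t => hqcont.add (continuous_const.mul hbcont)
  have hGdcont : ∀ t : ℝ, |t| < δ → Continuous (fun θ => Gd t θ) := fun t ht =>
    (hLcont.mul hbcont).div ((hdencont t).pow 2)
      (fun θ => pow_ne_zero 2 (hdenne t ht _ (abs_circ_one θ)))
  have hLqcont : ∀ t : ℝ, |t| < δ →
      Continuous (fun θ => L₀.eval (circ 1 θ)
        / (q.eval (circ 1 θ) + (t:ℂ) * b.eval (circ 1 θ))) :=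
    fun t ht => hLcont.div (hdencont t) (fun θ => hdenne t ht _ (abs_circ_one θ))
  have hGmeas : ∀ t : ℝ, |t| < δ → AEStronglyMeasurable (fun θ => G t θ) muc := fun t ht =>
    hf2.1.sub (hLqcont t ht).aestronglyMeasurable
  have hGL2 : ∀ t : ℝ, |t| < δ → MemLp (fun θ => G t θ) 2 muc := by
    intro t ht
    apply MemLp.sub hf2
    apply memL2_of_bound (hLqcont t ht) (ML / (m/2))
    intro θ
    rw [norm_div]
    exact div_le_div₀ hML0 (hML _ (abs_circ_one θ)) (by positivity) (hden t ht _ (abs_circ_one θ))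
  have hGdabs : ∀ t : ℝ, |t| < δ → ∀ θ : ℝ,
      ‖Gd t θ‖ ≤ ML * MB / ((m/2)^2) := by
    intro t ht θ
    simp only [hGd]
    rw [norm_div, norm_mul, norm_pow]
    apply div_le_div₀ (by positivity)
      (mul_le_mul (hML _ (abs_circ_one θ)) (hMB _ (abs_circ_one θ))
        (norm_nonneg _) hML0)
      (by positivity)
    exact pow_le_pow_left₀ (by positivity) (hden t ht _ (abs_circ_one θ)) 2
  have hGdL2 : ∀ t : ℝ, |t| < δ → MemLp (fun θ => Gd t θ) 2 muc := fun t ht =>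
    memL2_of_bound (hGdcont t ht) (ML * MB / ((m/2)^2)) (hGdabs t ht)
  have hGabs : ∀ t : ℝ, |t| < δ → ∀ θ : ℝ,
      ‖G t θ‖ ≤ ‖f (circ 1 θ)‖ + ML/(m/2) := by
    intro t ht θ
    simp only [hG]
    have h4 := norm_sub_le (f (circ 1 θ))
      (L₀.eval (circ 1 θ) / (q.eval (circ 1 θ) + (t:ℂ) * b.eval (circ 1 θ)))
    apply le_trans h4
    apply add_le_add_right
    rw [norm_div]
    exact div_le_div₀ hML0 (hML _ (abs_circ_one θ)) (by positivity) (hden t ht _ (abs_circ_one θ))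
  have hFint : ∀ t : ℝ, |t| < δ → Integrable (fun θ => F t θ) muc := fun t ht =>
    integrable_mul2 (hGL2 t ht) (memL2_conj (hGL2 t ht))
  set bound : ℝ → ℝ :=
    fun θ => 2 * (ML * MB / ((m/2)^2)) * (‖f (circ 1 θ)‖ + ML/(m/2)) with hbd
  have hboundint : IntervalIntegrable bound volume 0 (2*Real.pi) := by
    apply intervalIntegrable_of_integrable
    apply Integrable.const_mul
    apply Integrable.add ?_ (integrable_const _)
    have hfint : Integrable (fun θ => f (circ 1 θ)) muc := hf2.integrable (by norm_num)
    simpa using hfint.norm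
  have hFbound : ∀ t : ℝ, |t| < δ → ∀ θ : ℝ, ‖F' t θ‖ ≤ bound θ := by
    intro t ht θ
    have hA := hGdabs t ht θ
    have hB := hGabs t ht θ
    have hA0 := norm_nonneg (Gd t θ)
    have hB0 := norm_nonneg (G t θ)
    have h1 : ‖F' t θ‖ ≤ ‖Gd t θ‖ * ‖G t θ‖
        + ‖G t θ‖ * ‖Gd t θ‖ := by
      refine le_trans (norm_add_le _ _) (le_of_eq ?_)
      rw [norm_mul, norm_mul]
      simp
    rw [hbd]
    nlinarith [mul_le_mul hA hB hB0 (show (0:ℝ) ≤ ML*MB/((m/2)^2) by positivity)]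
  have huIoc : Set.uIoc (0:ℝ) (2*Real.pi) = Set.Ioc 0 (2*Real.pi) := Set.uIoc_of_le two_pi_pos.le
  have hmeas1 : ∀ᶠ t in nhds (0:ℝ),
      AEStronglyMeasurable (F t) (volume.restrict (Set.uIoc (0:ℝ) (2*Real.pi))) := by
    filter_upwards [Metric.ball_mem_nhds (0:ℝ) hδ] with t ht
    rw [Metric.mem_ball, dist_zero_right, Real.norm_eq_abs] at ht
    rw [huIoc]
    exact (hGmeas t ht).mul (Complex.continuous_conj.comp_aestronglyMeasurable (hGmeas t ht))
  have h0δ : |(0:ℝ)| < δ := by simpa using hδ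
  have hint0 : IntervalIntegrable (F 0) volume 0 (2*Real.pi) :=
    intervalIntegrable_of_integrable (hFint 0 h0δ)
  have hmeas2 : AEStronglyMeasurable (F' 0) (volume.restrict (Set.uIoc (0:ℝ) (2*Real.pi))) := by
    rw [huIoc]
    exact ((hGdcont 0 h0δ).aestronglyMeasurable.mul
        (Complex.continuous_conj.comp_aestronglyMeasurable (hGmeas 0 h0δ))).add
      ((hGmeas 0 h0δ).mul
        (Complex.continuous_conj.comp_aestronglyMeasurable
          (hGdcont 0 h0δ).aestronglyMeasurable))
  have hbae : ∀ᵐ θ ∂(volume : Measure ℝ), θ ∈ Set.uIoc (0:ℝ) (2*Real.pi) →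
      ∀ t ∈ Metric.ball (0:ℝ) δ, ‖F' t θ‖ ≤ bound θ := by
    apply MeasureTheory.ae_of_all
    intro θ _ t ht
    rw [Metric.mem_ball, dist_zero_right, Real.norm_eq_abs] at ht
    exact hFbound t ht θ
  have hdae : ∀ᵐ θ ∂(volume : Measure ℝ), θ ∈ Set.uIoc (0:ℝ) (2*Real.pi) →
      ∀ t ∈ Metric.ball (0:ℝ) δ, HasDerivAt (fun s => F s θ) (F' t θ) t := by
    apply MeasureTheory.ae_of_all
    intro θ _ t ht
    rw [Metric.mem_ball, dist_zero_right, Real.norm_eq_abs] at ht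
    exact hFderiv θ t ht
  obtain ⟨-, hder⟩ := intervalIntegral.hasDerivAt_integral_of_dominated_loc_of_deriv_le
    (Metric.ball_mem_nhds (0:ℝ) hδ) hmeas1 hint0 hmeas2 hbae hboundint hdae
  -- identification with `circNormSq`
  have hcongr : ∀ t : ℝ, circInner (fun z => f z - ratFun L₀ (monicOf n (d + t • v)) z)
      (fun z => f z - ratFun L₀ (monicOf n (d + t • v)) z)
      = (2*Real.pi)⁻¹ * ∫ θ in (0:ℝ)..(2*Real.pi), F t θ := by
    intro t
    rw [circInner]
    congr 1
    apply intervalIntegral.integral_congr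
    intro θ _
    have hev : (monicOf n (d + t • v)).eval (circ 1 θ)
        = q.eval (circ 1 θ) + (t:ℂ) * b.eval (circ 1 θ) := by
      rw [monicOf_eval_add_smul, hd, hbv]
    simp only [hF, hG, ratFun, hev]
  have hΦ : HasDerivAt (fun t : ℝ =>
      circInner (fun z => f z - ratFun L₀ (monicOf n (d + t • v)) z)
        (fun z => f z - ratFun L₀ (monicOf n (d + t • v)) z))
      ((2*Real.pi)⁻¹ * ∫ θ in (0:ℝ)..(2*Real.pi), F' 0 θ) 0 := by
    rw [show (fun t : ℝ => circInner (fun z => f z - ratFun L₀ (monicOf n (d + t • v)) z)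
      (fun z => f z - ratFun L₀ (monicOf n (d + t • v)) z))
      = fun t => (2*Real.pi)⁻¹ * ∫ θ in (0:ℝ)..(2*Real.pi), F t θ from funext hcongr]
    exact hder.const_mul _
  have hΨder : HasDerivAt (fun t : ℝ =>
      circNormSq (fun z => f z - ratFun L₀ (monicOf n (d + t • v)) z))
      ((2*Real.pi)⁻¹ * ∫ θ in (0:ℝ)..(2*Real.pi), F' 0 θ).re 0 := by
    have h5 := (Complex.reCLM.hasFDerivAt).comp_hasDerivAt 0 hΦ
    exact h5
  have hq't : ∀ t : ℝ, |t| < δ → ∀ z : ℂ, ‖z‖ = 1 →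
      (monicOf n (d + t • v)).eval z ≠ 0 := by
    intro t ht z hz
    rw [monicOf_eval_add_smul, hd, ← hbv]
    exact hdenne t ht z hz
  have hineq : ∀ t : ℝ, |t| < δ → phiCoord f n (d + t • v)
      ≤ circNormSq (fun z => f z - ratFun L₀ (monicOf n (d + t • v)) z) := by
    intro t ht
    exact lpoly_min f hf2 n (monicOf n (d + t • v)) (hq't t ht) L₀ hL.1
  have heq0 : circNormSq (fun z => f z - ratFun L₀ (monicOf n (d + (0:ℝ) • v)) z)
      = phiCoord f n (d + (0:ℝ) • v) := by
    rw [phiCoord]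
    rw [zero_smul, add_zero, hd, hL₀]
  have hmin : IsLocalMin (fun t : ℝ =>
      circNormSq (fun z => f z - ratFun L₀ (monicOf n (d + t • v)) z)
        - phiCoord f n (d + t • v)) 0 := by
    show ∀ᶠ t in nhds (0:ℝ), _ ≤ _
    filter_upwards [Metric.ball_mem_nhds (0:ℝ) hδ] with t ht
    rw [Metric.mem_ball, dist_zero_right, Real.norm_eq_abs] at ht
    have h6 := hineq t ht
    have h00 : circNormSq (fun z => f z - ratFun L₀ (monicOf n (d + (0:ℝ) • v)) z)
        - phiCoord f n (d + (0:ℝ) • v) = 0 := by rw [heq0]; ring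
    rw [h00]
    linarith
  have hχ := hΨder.sub (hIsCrit v)
  have hD0 := hmin.hasDerivAt_eq_zero hχ
  have hD : ((2*Real.pi)⁻¹ * ∫ θ in (0:ℝ)..(2*Real.pi), F' 0 θ).re = 0 := by
    simpa using hD0
  set E : ℂ → ℂ := fun z => f z - ratFun L₀ q z with hE
  set W : ℂ → ℂ := fun z => L₀.eval z * b.eval z / (q.eval z)^2 with hW
  have hq2ne : ∀ z : ℂ, ‖z‖ = 1 → (q^2).eval z ≠ 0 := by
    intro z hz
    rw [Polynomial.eval_pow]
    exact pow_ne_zero 2 (hqne z hz)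
  have hWL2 : MemLp (fun θ => W (circ 1 θ)) 2 muc := by
    have h6 := memL2_rat (L₀ * b) (q^2) hq2ne
    simpa [hW, Polynomial.eval_mul, Polynomial.eval_pow] using h6
  have hEL2 : MemLp (fun θ => E (circ 1 θ)) 2 muc := hf2.sub (memL2_rat L₀ q hqne)
  have hWE : IntervalIntegrable (fun θ => W (circ 1 θ) * (starRingEnd ℂ) (E (circ 1 θ)))
      volume 0 (2*Real.pi) :=
    intervalIntegrable_of_integrable (integrable_mul2 hWL2 (memL2_conj hEL2))
  have hEW : IntervalIntegrable (fun θ => E (circ 1 θ) * (starRingEnd ℂ) (W (circ 1 θ)))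
      volume 0 (2*Real.pi) :=
    intervalIntegrable_of_integrable (integrable_mul2 hEL2 (memL2_conj hWL2))
  have hsplit : (∫ θ in (0:ℝ)..(2*Real.pi), F' 0 θ)
      = (∫ θ in (0:ℝ)..(2*Real.pi), W (circ 1 θ) * (starRingEnd ℂ) (E (circ 1 θ)))
        + ∫ θ in (0:ℝ)..(2*Real.pi), E (circ 1 θ) * (starRingEnd ℂ) (W (circ 1 θ)) := by
    rw [← intervalIntegral.integral_add hWE hEW]
    apply intervalIntegral.integral_congr
    intro θ _
    have hW0 : Gd 0 θ = W (circ 1 θ) := by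
      simp [hGd, hW]
    have hE0 : G 0 θ = E (circ 1 θ) := by
      simp [hG, hE, ratFun]
    simp only [hF', hW0, hE0]
  have hcWE : circInner W E = (2*Real.pi)⁻¹
      * ∫ θ in (0:ℝ)..(2*Real.pi), W (circ 1 θ) * (starRingEnd ℂ) (E (circ 1 θ)) := rfl
  have hcEW : circInner E W = (2*Real.pi)⁻¹
      * ∫ θ in (0:ℝ)..(2*Real.pi), E (circ 1 θ) * (starRingEnd ℂ) (W (circ 1 θ)) := rfl
  rw [hsplit, mul_add, ← hcWE, ← hcEW, circInner_conj_symm E W] at hD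
  rw [Complex.add_re, Complex.conj_re] at hD
  show (circInner W E).re = 0
  linarith

lemma crit_orth_c (f : ℂ → ℂ) (hf2 : MemLp (fun θ => f (circ 1 θ)) 2 muc) (n : ℕ)
    (q : ℂ[X]) (hq : MemMn n q) (d : Fin n → ℂ) (hd : monicOf n d = q)
    (hL : IsOrthProjPoly f n q (Lpoly f n q))
    (hIsCrit : IsCritPt (phiCoord f n) d) (b' : ℂ[X]) (hb' : b'.degree < (n : WithBot ℕ)) :
    circInner (fun z => (Lpoly f n q).eval z * b'.eval z / (q.eval z)^2)
      (fun z => f z - ratFun (Lpoly f n q) q z) = 0 := by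
  set vb : Fin n → ℂ := fun j => b'.coeff (j:ℕ) with hvb
  have hlift : liftPoly n vb = b' := (eq_liftPoly_of_degree_lt hb').symm
  have h1 := crit_orth f hf2 n q hq d hd hL hIsCrit vb
  rw [hlift] at h1
  have h2 := crit_orth f hf2 n q hq d hd hL hIsCrit (Complex.I • vb)
  have hfun : (fun z => (Lpoly f n q).eval z * (liftPoly n (Complex.I • vb)).eval z
        / (q.eval z)^2)
      = fun z => Complex.I * ((Lpoly f n q).eval z * b'.eval z / (q.eval z)^2) := by
    funext z
    rw [liftPoly_smul_eval, hlift]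
    ring
  rw [hfun, circInner_smul_left, Complex.mul_re, Complex.I_re, Complex.I_im] at h2
  apply Complex.ext
  · simpa using h1
  · simp only [Complex.zero_im]
    simpa using h2

end AuxDoubleOrth
/-- **Orthogonality relation (3.4).** If `q ∈ M_n` is an irreducible critical point of
`φ_{f,n}`, then `⟨p/q², f − L_q/q⟩ = 0` for every `p ∈ P_{2n−1}`. -/
theorem double_orthogonality
    (f : ℂ → ℂ) (hf : MemH2bar0 f) (n : ℕ) (q : ℂ[X]) (hq : MemMn n q)
    (hL : IsOrthProjPoly f n q (Lpoly f n q))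
    (hcrit : IsCriticalPhi f n q)
    (hirr : IsCoprime (Lpoly f n q) q) :
    ∀ p : ℂ[X], p.degree < ((2 * n : ℕ) : WithBot ℕ) →
      circInner (fun z => p.eval z / (q.eval z) ^ 2)
        (fun z => f z - ratFun (Lpoly f n q) q z) = 0 := by
  intro p hp
  obtain ⟨d, hd, hIsCrit⟩ := hcrit
  have hf2 : MeasureTheory.MemLp (fun θ => f (circ 1 θ)) 2 muc := hf.1
  have hqne := MemMn.eval_circle_ne hq
  obtain ⟨a, bb, ha, hb, hab⟩ := bezout_decomp hirr hq.1 hq.2.1 hL.1 p hp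
  have hpt : (fun z => p.eval z / (q.eval z) ^ 2)
      = fun z => a.eval z / q.eval z
          + (Lpoly f n q).eval z * bb.eval z / (q.eval z)^2 := by
    funext z
    by_cases hz : q.eval z = 0
    · simp [hz]
    · have hev : p.eval z = a.eval z * q.eval z + bb.eval z * (Lpoly f n q).eval z := by
        rw [hab]
        simp [Polynomial.eval_add, Polynomial.eval_mul]
      rw [hev]
      field_simp
  rw [hpt]
  have he2 : MeasureTheory.MemLp
      (fun θ => f (circ 1 θ) - ratFun (Lpoly f n q) q (circ 1 θ)) 2 muc :=
    hf2.sub (memL2_rat (Lpoly f n q) q hqne)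
  have hq2ne : ∀ z : ℂ, ‖z‖ = 1 → (q^2).eval z ≠ 0 := by
    intro z hz
    rw [Polynomial.eval_pow]
    exact pow_ne_zero 2 (hqne z hz)
  have h1 : MeasureTheory.Integrable (fun θ => (a.eval (circ 1 θ) / q.eval (circ 1 θ))
      * (starRingEnd ℂ) (f (circ 1 θ) - ratFun (Lpoly f n q) q (circ 1 θ))) muc :=
    integrable_mul2 (memL2_rat a q hqne) (memL2_conj he2)
  have hWL2 : MeasureTheory.MemLp (fun θ => (Lpoly f n q).eval (circ 1 θ)
      * bb.eval (circ 1 θ) / (q.eval (circ 1 θ))^2) 2 muc := by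
    have h6 := memL2_rat ((Lpoly f n q) * bb) (q^2) hq2ne
    simpa [Polynomial.eval_mul, Polynomial.eval_pow] using h6
  have h2 : MeasureTheory.Integrable (fun θ => ((Lpoly f n q).eval (circ 1 θ)
      * bb.eval (circ 1 θ) / (q.eval (circ 1 θ))^2)
      * (starRingEnd ℂ) (f (circ 1 θ) - ratFun (Lpoly f n q) q (circ 1 θ))) muc :=
    integrable_mul2 hWL2 (memL2_conj he2)
  rw [circInner_add_left (g₁ := fun z => a.eval z / q.eval z)
    (g₂ := fun z => (Lpoly f n q).eval z * bb.eval z / (q.eval z)^2)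
    (h := fun z => f z - ratFun (Lpoly f n q) q z) h1 h2]
  have e1 : circInner (fun z => a.eval z / q.eval z)
      (fun z => f z - ratFun (Lpoly f n q) q z) = 0 := by
    have h8 : circInner (fun z => f z - ratFun (Lpoly f n q) q z)
        (fun z => a.eval z / q.eval z) = 0 := hL.2 a ha
    rw [circInner_conj_symm, h8, map_zero]
  have e2 := crit_orth_c f hf2 n q hq d hd hL hIsCrit bb hb
  rw [e1, e2, add_zero]

end RatApprox
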